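/- For all integers k ≥ 1 and j ≥ 1, the generalized transformation coefficients satisfy S(k, j) = (1/j!) · Σ_{i=1}^{j} S(k−1, i) · (−1)^{j−i} · (i−1)!. -/

import Mathlib

/-- The generalized transformation coefficient
`S k j = (1/j!) · Σ_{m=1}^{j} C(j,m) · (−1)^{j−m} · m^{−k}`. -/
noncomputable def S (k j : ℕ) : ℝ :=
  (1 / (Nat.factorial j : ℝ)) *
    ∑ m ∈ Finset.Icc 1 j, (Nat.choose j m : ℝ) * (-1 : ℝ) ^ (j - m) / (m : ℝ) ^ k

lemma hockeyN (m j : ℕ) : ∑ i ∈ Finset.Icc (m+1) (j+1), (i-1).choose m = (j+1).choose (m+1) := by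
  have h : ∑ i ∈ Finset.Icc (m+1) (j+1), (i-1).choose m = ∑ i ∈ Finset.Icc m j, i.choose m := by
    rw [← Finset.map_add_right_Icc _ _ 1, Finset.sum_map]
    simp
  rw [h, Nat.sum_Icc_choose]

theorem stmt_13 (k j : ℕ) (hk : 1 ≤ k) (hj : 1 ≤ j) :
    S k j = (1 / (Nat.factorial j : ℝ)) *
      ∑ i ∈ Finset.Icc 1 j, S (k - 1) i * (-1 : ℝ) ^ (j - i) * (Nat.factorial (i - 1) : ℝ) := by
  obtain ⟨n, rfl⟩ : ∃ n, k = n + 1 := ⟨k - 1, by omega⟩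
  unfold S
  congr 1
  have step1 : ∀ i ∈ Finset.Icc 1 j,
      ((1 / ((i.factorial : ℝ))) *
        ∑ m ∈ Finset.Icc 1 i, (i.choose m : ℝ) * (-1:ℝ)^(i-m) / (m:ℝ)^(n+1-1)) *
        (-1:ℝ)^(j-i) * ((i-1).factorial : ℝ)
      = ∑ m ∈ Finset.Icc 1 i, (i.choose m : ℝ) * (-1:ℝ)^(j-m) / ((i:ℝ) * (m:ℝ)^n) := by
    intro i hi
    simp only [Finset.mem_Icc] at hi
    rw [Finset.mul_sum, Finset.sum_mul, Finset.sum_mul]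
    refine Finset.sum_congr rfl fun m hm => ?_
    simp only [Finset.mem_Icc] at hm
    have hfac : (i.factorial : ℝ) = i * (i-1).factorial := by
      rw_mod_cast [Nat.mul_factorial_pred (by omega)]
    have hsign : (-1:ℝ)^(i-m) * (-1:ℝ)^(j-i) = (-1:ℝ)^(j-m) := by
      rw [← pow_add]; congr 1; omega
    have h1 : (n + 1 - 1) = n := by omega
    have hipos : 0 < i := by omega
    have hi0 : (i:ℝ) ≠ 0 := by positivity
    have hf0 : ((i-1).factorial : ℝ) ≠ 0 := by positivity
    have hmpos : 0 < m := by omega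
    have hm0 : (m:ℝ)^n ≠ 0 := by positivity
    rw [h1, hfac]
    field_simp
    rw [← hsign]
    ring
  rw [Finset.sum_congr rfl step1]
  rw [Finset.sum_comm' (t' := Finset.Icc 1 j) (s' := fun m => Finset.Icc m j)
    (by intro i m; simp only [Finset.mem_Icc]; omega)]
  refine (Finset.sum_congr rfl fun m hm => ?_).symm
  simp only [Finset.mem_Icc] at hm
  have key : ∀ i ∈ Finset.Icc m j,
      (i.choose m : ℝ) * (-1:ℝ)^(j-m) / ((i:ℝ) * (m:ℝ)^n)
      = (((i-1).choose (m-1) : ℝ)) * ((-1:ℝ)^(j-m) / ((m:ℝ) * (m:ℝ)^n)) := by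
    intro i hi
    simp only [Finset.mem_Icc] at hi
    have hid : (i:ℝ) * ((i-1).choose (m-1) : ℝ) = (i.choose m : ℝ) * m := by
      have := Nat.add_one_mul_choose_eq (i-1) (m-1)
      have h1 : i - 1 + 1 = i := by omega
      have h2 : m - 1 + 1 = m := by omega
      rw [h1, h2] at this
      exact_mod_cast congrArg Nat.cast this
    have hi0 : (i:ℝ) ≠ 0 := by
      have : 0 < i := by omega
      positivity
    have hm0 : (m:ℝ) ≠ 0 := by
      have : 0 < m := by omega
      positivity
    have hmn : (m:ℝ)^n ≠ 0 := by positivity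
    have h1 : (i:ℝ) * (m:ℝ)^n ≠ 0 := mul_ne_zero hi0 hmn
    have h2 : (m:ℝ) * (m:ℝ)^n ≠ 0 := mul_ne_zero hm0 hmn
    rw [← mul_div_assoc, div_eq_div_iff h1 h2]
    linear_combination (-((-1:ℝ)^(j-m) * (m:ℝ)^n)) * hid
  rw [Finset.sum_congr rfl key, ← Finset.sum_mul]
  have hsum : ∑ i ∈ Finset.Icc m j, (((i-1).choose (m-1)) : ℝ) = (j.choose m : ℝ) := by
    rw [← Nat.cast_sum]
    norm_cast
    obtain ⟨m', rfl⟩ : ∃ m', m = m' + 1 := ⟨m - 1, by omega⟩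
    obtain ⟨j', rfl⟩ : ∃ j', j = j' + 1 := ⟨j - 1, by omega⟩
    simpa using hockeyN m' j'
  rw [hsum]
  have hm0 : (m:ℝ) ≠ 0 := by
    have : 0 < m := by omega
    positivity
  have hmn : (m:ℝ)^n ≠ 0 := by positivity
  rw [pow_succ]
  ring
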